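/- arXiv:2105.07089 — 2 statements merged into one kernel-verified Lean document; each statement's English description precedes it below -/
import Mathlib

section
/- In Remark 2's counterexample: over GF(2), the system of equations giving receiver 1 the values {a₁⊕b₁ (from t₁), a₄⊕b₄ (from t₄), b₁⊕b₄, a₂⊕a₃, a₃ (direct at t₃)} does NOT determine a₁ and a₄ uniquely; i.e., there exist two distinct assignments of (a₁,a₂,a₃,a₄,b₁,b₂,b₃,b₄) ∈ GF(2)⁸ agreeing on all these observed values but differing in a₁. -/
/-- Remark 2's counterexample: over `GF(2)`, the observations
`{a₁⊕b₁, a₄⊕b₄, b₁⊕b₄, a₂⊕a₃, a₃}` available at receiver 1 do NOT determine `a₁`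
uniquely: there exist two assignments agreeing on all observed values but differing
in `a₁`. -/
theorem pan_scheme_not_decodable :
    ∃ a₁ a₂ a₃ a₄ b₁ b₂ b₃ b₄ a₁' a₂' a₃' a₄' b₁' b₂' b₃' b₄' : ZMod 2,
      a₁ + b₁ = a₁' + b₁' ∧ a₄ + b₄ = a₄' + b₄' ∧ b₁ + b₄ = b₁' + b₄' ∧
      a₂ + a₃ = a₂' + a₃' ∧ a₃ = a₃' ∧ a₁ ≠ a₁' := ⟨0,0,0,0,0,0,0,0,1,0,0,1,1,0,0,1, by decide, by decide, by decide, by decide, by decide, by decide⟩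
end

section
/- For a queue with strictly stationary arrival process {A_t} and departure (service) process {D_t} each taking values in ℕ, if E[A₀] < E[D₀] then the queue-length process Q_{t+1} = max(Q_t + A_t - D_t, 0) started from Q₀ = 0 satisfies: Q_t/t → 0 almost surely as t → ∞. -/
open MeasureTheory Filter

set_option linter.unusedSectionVars false

section LoynesAux

variable {Ω : Type*} [MeasurableSpace Ω]

/-- Birkhoff sums. -/
noncomputable def loynesBS (T : Ω → Ω) (g : Ω → ℝ) (n : ℕ) (ω : Ω) : ℝ :=
  ∑ i ∈ Finset.range n, g (T^[i] ω)

/-- Running maxima of Birkhoff sums `max_{0 ≤ n ≤ N} S_n` (with `S_0 = 0`). -/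
noncomputable def loynesMS (T : Ω → Ω) (g : Ω → ℝ) : ℕ → Ω → ℝ
  | 0 => fun _ => 0
  | (N + 1) => fun ω => max (loynesMS T g N ω) (loynesBS T g (N + 1) ω)

lemma loynesBS_zero (T : Ω → Ω) (g : Ω → ℝ) (ω : Ω) : loynesBS T g 0 ω = 0 := by
  simp [loynesBS]

lemma loynesBS_succ (T : Ω → Ω) (g : Ω → ℝ) (n : ℕ) (ω : Ω) :
    loynesBS T g (n + 1) ω = g ω + loynesBS T g n (T ω) := by
  unfold loynesBS
  rw [Finset.sum_range_succ']
  simp [Function.iterate_succ_apply, add_comm]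

lemma loynesBS_succ' (T : Ω → Ω) (g : Ω → ℝ) (n : ℕ) (ω : Ω) :
    loynesBS T g (n + 1) ω = loynesBS T g n ω + g (T^[n] ω) := by
  unfold loynesBS
  rw [Finset.sum_range_succ]

lemma loynesMS_nonneg (T : Ω → Ω) (g : Ω → ℝ) (N : ℕ) (ω : Ω) :
    0 ≤ loynesMS T g N ω := by
  induction N with
  | zero => simp [loynesMS]
  | succ N ih => exact le_trans ih (le_max_left _ _)

lemma loynesMS_mono (T : Ω → Ω) (g : Ω → ℝ) {N M : ℕ} (h : N ≤ M) (ω : Ω) :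
    loynesMS T g N ω ≤ loynesMS T g M ω := by
  induction M with
  | zero => simp_all
  | succ M ih =>
    rcases Nat.lt_succ_iff_lt_or_eq.mp (Nat.lt_succ_of_le h) with h' | h'
    · exact le_trans (ih (Nat.lt_succ_iff.mp h')) (le_max_left _ _)
    · subst h'; rfl

lemma loynesBS_le_MS (T : Ω → Ω) (g : Ω → ℝ) {n N : ℕ} (h : n ≤ N) (ω : Ω) :
    loynesBS T g n ω ≤ loynesMS T g N ω := by
  rcases Nat.eq_zero_or_pos n with rfl | hn
  · rw [loynesBS_zero]; exact loynesMS_nonneg T g N ω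
  · obtain ⟨m, rfl⟩ := Nat.exists_eq_add_of_lt hn
    have : loynesBS T g (0 + m + 1) ω ≤ loynesMS T g (0 + m + 1) ω := le_max_right _ _
    exact le_trans this (loynesMS_mono T g h ω)

lemma loynesMS_key (T : Ω → Ω) (g : Ω → ℝ) (N : ℕ) (ω : Ω) :
    loynesMS T g N ω ≤ max 0 (g ω + loynesMS T g N (T ω)) := by
  induction N with
  | zero => simp [loynesMS]
  | succ N ih =>
    refine max_le ?_ ?_
    · exact le_trans ih (max_le_max le_rfl
        (add_le_add le_rfl (loynesMS_mono T g (Nat.le_succ N) (T ω))))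
    · rw [loynesBS_succ]
      exact le_trans (le_max_right 0 _)
        (max_le_max le_rfl (add_le_add le_rfl (loynesBS_le_MS T g (Nat.le_succ N) (T ω))))

lemma loynesBS_measurable {T : Ω → Ω} {g : Ω → ℝ} (hT : Measurable T) (hg : Measurable g)
    (n : ℕ) : Measurable (loynesBS T g n) := by
  unfold loynesBS
  exact Finset.measurable_sum _ fun i _ => hg.comp (hT.iterate i)

lemma loynesMS_measurable {T : Ω → Ω} {g : Ω → ℝ} (hT : Measurable T) (hg : Measurable g)
    (N : ℕ) : Measurable (loynesMS T g N) := by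
  induction N with
  | zero => simpa [loynesMS] using measurable_const
  | succ N ih => exact Measurable.max ih (loynesBS_measurable hT hg (N + 1))

lemma loynesBS_integrable {μ : Measure Ω} {T : Ω → Ω} {g : Ω → ℝ}
    (hT : MeasurePreserving T μ μ) (hg : Integrable g μ) (n : ℕ) :
    Integrable (loynesBS T g n) μ := by
  unfold loynesBS
  apply integrable_finset_sum
  intro i _
  exact ((hT.iterate i).integrable_comp hg.aestronglyMeasurable).mpr hg

lemma loynesMS_integrable {μ : Measure Ω} {T : Ω → Ω} {g : Ω → ℝ}
    (hT : MeasurePreserving T μ μ) (hg : Integrable g μ) (N : ℕ) :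
    Integrable (loynesMS T g N) μ := by
  induction N with
  | zero => simpa [loynesMS] using integrable_const (0 : ℝ)
  | succ N ih =>
    have : loynesMS T g (N + 1) = (loynesMS T g N) ⊔ (loynesBS T g (N + 1)) := by
      funext ω; simp [loynesMS, Pi.sup_apply]
    rw [this]
    exact ih.sup (loynesBS_integrable hT hg (N + 1))

/-- The maximal ergodic theorem (Garsia's proof). -/
lemma loynes_maximal_ergodic {μ : Measure Ω} [IsProbabilityMeasure μ] {T : Ω → Ω} {g : Ω → ℝ}
    (hT : MeasurePreserving T μ μ) (hgm : Measurable g) (hgi : Integrable g μ) (N : ℕ) :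
    0 ≤ ∫ ω in {ω | 0 < loynesMS T g N ω}, g ω ∂μ := by
  set M := loynesMS T g N with hM
  set E := {ω | 0 < M ω} with hEdef
  have hTm : Measurable T := hT.measurable
  have hMm : Measurable M := loynesMS_measurable hTm hgm N
  have hE : MeasurableSet E := measurableSet_lt measurable_const hMm
  have hMi : Integrable M μ := loynesMS_integrable hT hgi N
  have hMTi : Integrable (fun ω => M (T ω)) μ :=
    (hT.integrable_comp hMi.aestronglyMeasurable).mpr hMi
  have step1 : ∫ ω in E, (M ω - M (T ω)) ∂μ ≤ ∫ ω in E, g ω ∂μ := by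
    refine setIntegral_mono_on ((hMi.sub hMTi).integrableOn) (hgi.integrableOn) hE ?_
    intro ω hω
    have hkey := loynesMS_key T g N ω
    have hpos : 0 < M ω := hω
    rcases max_cases (0 : ℝ) (g ω + M (T ω)) with ⟨h1, _⟩ | ⟨h1, _⟩
    · rw [h1] at hkey; linarith
    · rw [h1] at hkey; linarith
  have step2 : ∫ ω in E, (M ω - M (T ω)) ∂μ
      = (∫ ω in E, M ω ∂μ) - ∫ ω in E, M (T ω) ∂μ :=
    integral_sub (hMi.integrableOn) (hMTi.integrableOn)
  have step3 : ∫ ω in E, M ω ∂μ = ∫ ω, M ω ∂μ := by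
    have hcompl : ∫ ω in Eᶜ, M ω ∂μ = 0 := by
      refine setIntegral_eq_zero_of_forall_eq_zero ?_
      intro ω hω
      have h1 : ¬ 0 < M ω := hω
      exact le_antisymm (not_lt.mp h1) (loynesMS_nonneg T g N ω)
    rw [← integral_add_compl hE hMi, hcompl, add_zero]
  have step4 : ∫ ω in E, M (T ω) ∂μ ≤ ∫ ω, M (T ω) ∂μ :=
    setIntegral_le_integral hMTi (Filter.Eventually.of_forall fun ω => loynesMS_nonneg T g N (T ω))
  have step5 : ∫ ω, M (T ω) ∂μ = ∫ ω, M ω ∂μ := by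
    conv_rhs => rw [← hT.map_eq]
    exact (integral_map hTm.aemeasurable hMm.aestronglyMeasurable).symm
  linarith

/-- One-sided ergodic bound: a.e. the Birkhoff sums of `f` grow slower than `n * d`
for any `d` above the mean, up to an additive constant. -/
lemma loynes_ae_bdd {μ : Measure Ω} [IsProbabilityMeasure μ] {T : Ω → Ω}
    (hT : Ergodic T μ) {f : Ω → ℝ} (hfm : Measurable f) (hfi : Integrable f μ) {d : ℝ}
    (hd : ∫ ω, f ω ∂μ < d) :
    ∀ᵐ ω ∂μ, ∃ C : ℝ, ∀ n : ℕ, loynesBS T f n ω ≤ n * d + C := by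
  have hTm : Measurable T := hT.measurable
  set g : Ω → ℝ := fun ω => f ω - d with hg
  have hgm : Measurable g := hfm.sub measurable_const
  have hgi : Integrable g μ := hfi.sub (integrable_const d)
  have hgint : ∫ ω, g ω ∂μ = (∫ ω, f ω ∂μ) - d := by
    rw [integral_sub hfi (integrable_const d), integral_const]
    simp
  have hbSg : ∀ n ω, loynesBS T g n ω = loynesBS T f n ω - n * d := by
    intro n ω
    unfold loynesBS
    rw [Finset.sum_sub_distrib (G := ℝ), Finset.sum_const, Finset.card_range, nsmul_eq_mul]
  set Aset : Set Ω := {ω | ∀ C : ℕ, ∃ n : ℕ, (C : ℝ) < loynesBS T g n ω} with hAdef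
  have hAm : MeasurableSet Aset := by
    have : Aset = ⋂ C : ℕ, ⋃ n : ℕ, {ω | (C : ℝ) < loynesBS T g n ω} := by
      ext ω; simp [hAdef]
    rw [this]
    exact MeasurableSet.iInter fun C => MeasurableSet.iUnion fun n =>
      measurableSet_lt measurable_const (loynesBS_measurable hTm hgm n)
  have hinv : T ⁻¹' Aset = Aset := by
    ext ω
    simp only [Set.mem_preimage, hAdef, Set.mem_setOf_eq]
    constructor
    · intro h C
      obtain ⟨C', hC'⟩ := exists_nat_ge ((C : ℝ) - g ω)
      obtain ⟨n, hn⟩ := h C'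
      refine ⟨n + 1, ?_⟩
      rw [loynesBS_succ]
      linarith
    · intro h C
      obtain ⟨C', hC'⟩ := exists_nat_ge ((C : ℝ) + g ω)
      obtain ⟨n, hn⟩ := h C'
      match n with
      | 0 =>
        rw [loynesBS_zero] at hn
        exact absurd hn (not_lt.mpr (Nat.cast_nonneg C'))
      | (m + 1) =>
        refine ⟨m, ?_⟩
        rw [loynesBS_succ] at hn
        linarith
  rcases hT.toPreErgodic.ae_empty_or_univ hAm hinv with hA | hA
  · -- μ Aset = 0 : good case
    have hA0 : μ Aset = 0 := by
      have := measure_congr hA; simpa using this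
    have hae : ∀ᵐ ω ∂μ, ω ∉ Aset := by
      rw [ae_iff]
      simpa [Set.setOf_mem_eq] using hA0
    filter_upwards [hae] with ω hω
    rw [hAdef, Set.mem_setOf_eq] at hω
    push_neg at hω
    obtain ⟨C, hC⟩ := hω
    refine ⟨C, fun n => ?_⟩
    have := hC n
    have h2 := hbSg n ω
    linarith
  · -- μ Aset = 1 : contradiction with the maximal ergodic theorem
    exfalso
    have hA1 : μ Aset = 1 := by
      have := measure_congr hA; simpa using this
    set E : ℕ → Set Ω := fun N => {ω | 0 < loynesMS T g N ω} with hEdef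
    have hEm : ∀ N, MeasurableSet (E N) := fun N =>
      measurableSet_lt measurable_const (loynesMS_measurable hTm hgm N)
    have hEmono : Monotone E := by
      intro N M h ω hω
      exact lt_of_lt_of_le hω (loynesMS_mono T g h ω)
    have hsub : Aset ⊆ ⋃ N, E N := by
      intro ω hω
      obtain ⟨n, hn⟩ := hω 0
      have : 0 < loynesMS T g n ω :=
        lt_of_lt_of_le (by simpa using hn) (loynesBS_le_MS T g le_rfl ω)
      exact Set.mem_iUnion.mpr ⟨n, this⟩
    have hUm : MeasurableSet (⋃ N, E N) := MeasurableSet.iUnion hEm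
    have hU1 : μ (⋃ N, E N) = 1 := by
      refine le_antisymm prob_le_one ?_
      rw [← hA1]
      exact measure_mono hsub
    have htend := tendsto_setIntegral_of_monotone hEm hEmono (hgi.integrableOn)
    have hlim : 0 ≤ ∫ ω in ⋃ N, E N, g ω ∂μ :=
      ge_of_tendsto htend (Filter.Eventually.of_forall fun N =>
        loynes_maximal_ergodic hT.toMeasurePreserving hgm hgi N)
    have heq : ∫ ω in ⋃ N, E N, g ω ∂μ = ∫ ω, g ω ∂μ := by
      have hcompl0 : μ ((⋃ N, E N)ᶜ) = 0 := by
        rw [measure_compl hUm (measure_ne_top μ _), hU1]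
        simp
      have : ∫ ω in (⋃ N, E N)ᶜ, g ω ∂μ = 0 := by
        rw [Measure.restrict_eq_zero.mpr hcompl0, integral_zero_measure]
      rw [← integral_add_compl hUm hgi, this, add_zero]
    rw [heq, hgint] at hlim
    linarith

end LoynesAux


/-- Weak form of Loynes' theorem: for a jointly stationary ergodic arrival/departure
process (modeled by an ergodic shift `T` with `A_t = A ∘ T^[t]`, `D_t = D ∘ T^[t]`),
if `E[A₀] < E[D₀]` then the Lindley queue `Q_{t+1} = max(Q_t + A_t - D_t, 0)` started
from `Q₀ = 0` satisfies `Q_t / t → 0` almost surely. -/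
theorem loynes_sublinear {Ω : Type*} [MeasurableSpace Ω]
    (μ : Measure Ω) [IsProbabilityMeasure μ]
    (T : Ω → Ω) (hT : Ergodic T μ)
    (A D : Ω → ℕ) (hA : Measurable A) (hD : Measurable D)
    (hAint : Integrable (fun ω => (A ω : ℝ)) μ)
    (hDint : Integrable (fun ω => (D ω : ℝ)) μ)
    (hmean : ∫ ω, (A ω : ℝ) ∂μ < ∫ ω, (D ω : ℝ) ∂μ)
    (Q : ℕ → Ω → ℝ)
    (hQ0 : ∀ ω, Q 0 ω = 0)
    (hQrec : ∀ t ω, Q (t + 1) ω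
      = max (Q t ω + (A (T^[t] ω) : ℝ) - (D (T^[t] ω) : ℝ)) 0) :
    ∀ᵐ ω ∂μ, Tendsto (fun t : ℕ => Q t ω / t) atTop (nhds 0) := by
  classical
  set x : Ω → ℝ := fun ω => (A ω : ℝ) - (D ω : ℝ) with hxdef
  have hxm : Measurable x :=
    (measurable_from_top.comp hA).sub (measurable_from_top.comp hD)
  have hxi : Integrable x μ := hAint.sub hDint
  have hyi : Integrable (fun ω => -x ω) μ := hxi.neg
  set c : ℝ := ∫ ω, x ω ∂μ with hcdef
  have hc : c < 0 := by
    rw [hcdef, hxdef]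
    rw [integral_sub hAint hDint]
    linarith
  have hxneg : ∀ n ω, loynesBS T (fun ω => -x ω) n ω = -loynesBS T x n ω := by
    intro n ω
    unfold loynesBS
    rw [← Finset.sum_neg_distrib (G := ℝ)]
  -- a.e. two-sided linear bounds on the Birkhoff sums, for each ε = 1/(m+1)
  have h1 : ∀ᵐ ω ∂μ, ∀ m : ℕ, ∃ C : ℝ, ∀ n : ℕ,
      loynesBS T x n ω ≤ n * (c + 1 / (m + 1)) + C := by
    rw [ae_all_iff]
    intro m
    refine loynes_ae_bdd hT hxm hxi ?_
    have : (0:ℝ) < 1 / ((m:ℝ) + 1) := by positivity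
    linarith
  have h2 : ∀ᵐ ω ∂μ, ∀ m : ℕ, ∃ C : ℝ, ∀ n : ℕ,
      loynesBS T (fun ω => -x ω) n ω ≤ n * (-c + 1 / (m + 1)) + C := by
    rw [ae_all_iff]
    intro m
    refine loynes_ae_bdd hT hxm.neg hyi ?_
    show ∫ ω, -x ω ∂μ < _
    rw [integral_neg]
    have : (0:ℝ) < 1 / ((m:ℝ) + 1) := by positivity
    linarith
  filter_upwards [h1, h2] with ω h1 h2
  -- queue representation: Q t = S t - S k for some k ≤ t, and Q t ≥ 0
  have hQS : ∀ t : ℕ, 0 ≤ Q t ω ∧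
      ∃ k : ℕ, k ≤ t ∧ Q t ω = loynesBS T x t ω - loynesBS T x k ω := by
    intro t
    induction t with
    | zero => exact ⟨le_of_eq (hQ0 ω).symm, 0, le_rfl, by simp [hQ0]⟩
    | succ t ih =>
      obtain ⟨hpos, k, hk, hQk⟩ := ih
      have hrec : Q (t + 1) ω = max (Q t ω + x (T^[t] ω)) 0 := by
        rw [hQrec t ω, hxdef]; ring_nf
      by_cases h : 0 ≤ Q t ω + x (T^[t] ω)
      · refine ⟨?_, k, hk.trans (Nat.le_succ t), ?_⟩
        · rw [hrec]; exact le_max_right _ _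
        · rw [hrec, max_eq_left h, hQk, loynesBS_succ']; ring
      · refine ⟨?_, t + 1, le_rfl, ?_⟩
        · rw [hrec]; exact le_max_right _ _
        · rw [hrec, max_eq_right (le_of_not_ge h)]; ring
  -- conclude Tendsto
  rw [Metric.tendsto_atTop]
  intro δ hδ
  obtain ⟨m, hm⟩ := exists_nat_one_div_lt (show (0:ℝ) < δ / 4 by linarith)
  set ε : ℝ := 1 / ((m : ℝ) + 1) with hεdef
  have hε : 0 < ε := by positivity
  obtain ⟨C₁, hC₁⟩ := h1 m
  obtain ⟨C₂, hC₂⟩ := h2 m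
  set C : ℝ := C₁ + C₂ with hCdef
  have hQle : ∀ t : ℕ, Q t ω ≤ 2 * ε * t + C := by
    intro t
    obtain ⟨_, k, hk, hQk⟩ := hQS t
    have hS_t : loynesBS T x t ω ≤ t * (c + ε) + C₁ := hC₁ t
    have hS_k : -loynesBS T x k ω ≤ k * (-c + ε) + C₂ := by
      have := hC₂ k; rwa [hxneg] at this
    have hkt : (k : ℝ) ≤ t := Nat.cast_le.mpr hk
    have hck : (k : ℝ) * (-c + ε) ≤ t * (-c + ε) :=
      mul_le_mul_of_nonneg_right hkt (by linarith)
    rw [hQk]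
    have : loynesBS T x t ω - loynesBS T x k ω
        ≤ t * (c + ε) + C₁ + (t * (-c + ε) + C₂) := by linarith
    calc loynesBS T x t ω - loynesBS T x k ω
        ≤ t * (c + ε) + C₁ + (t * (-c + ε) + C₂) := this
      _ = 2 * ε * t + C := by rw [hCdef]; ring
  obtain ⟨N₀, hN₀⟩ := exists_nat_gt (max 1 (C / (δ / 2)))
  refine ⟨N₀, fun t ht => ?_⟩
  have htN : (N₀ : ℝ) ≤ t := Nat.cast_le.mpr ht
  have ht1 : (1 : ℝ) ≤ t := le_trans (le_of_lt (lt_of_le_of_lt (le_max_left _ _) hN₀)) htN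
  have htpos : (0 : ℝ) < t := by linarith
  have hCt : C < t * (δ / 2) := by
    have h1' : C / (δ / 2) < (t : ℝ) :=
      lt_of_lt_of_le (lt_of_le_of_lt (le_max_right _ _) hN₀) htN
    have hδ2 : (0:ℝ) < δ / 2 := by linarith
    calc C = C / (δ / 2) * (δ / 2) := by field_simp
      _ < t * (δ / 2) := by exact mul_lt_mul_of_pos_right h1' hδ2
  have hεδ : 2 * ε < δ / 2 := by
    rw [hεdef]; push_cast; linarith [hm]
  have hQpos : 0 ≤ Q t ω := (hQS t).1
  rw [Real.dist_eq, sub_zero, abs_of_nonneg (div_nonneg hQpos (le_of_lt htpos))]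
  rw [div_lt_iff₀ htpos]
  have h2εt : 2 * ε * t ≤ (δ / 2) * t := mul_le_mul_of_nonneg_right hεδ.le htpos.le
  calc Q t ω ≤ 2 * ε * t + C := hQle t
    _ < (δ / 2) * t + t * (δ / 2) := by linarith
    _ = δ * t := by ring
end
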